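/- Let H be an n-dimensional Hilbert space and {q_i}_{i=1}^N a weight number sequence (q_i ≥ 1, Σ 1/q_i = n). Then there exists a Parseval frame F = {f_i}_{i=1}^N for H with ‖f_i‖ = 1/√(q_i) for every i. -/

import Mathlib

open scoped InnerProductSpace
open Module

private lemma exists_unit_vec {H : Type*} [NormedAddCommGroup H] [InnerProductSpace ℂ H]
    [FiniteDimensional ℂ H] (h : finrank ℂ H ≠ 0) : ∃ e : H, ‖e‖ = 1 := by
  have : Nontrivial H := by
    by_contra hc
    rw [not_nontrivial_iff_subsingleton] at hc
    exact h (Module.finrank_zero_iff.mpr hc)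
  obtain ⟨v, hv⟩ := exists_ne (0 : H)
  exact ⟨((‖v‖ : ℂ))⁻¹ • v, norm_smul_inv_norm hv⟩

private lemma frame_transfer {H : Type*} [NormedAddCommGroup H] [InnerProductSpace ℂ H]
    {N : ℕ} (c : Fin N → ℝ) (σ : Equiv.Perm (Fin N))
    (h : ∃ f : Fin N → H, (∀ x : H, ∑ i, ⟪f i, x⟫_ℂ • f i = x) ∧ ∀ i, ‖f i‖ ^ 2 = c (σ i)) :
    ∃ f : Fin N → H, (∀ x : H, ∑ i, ⟪f i, x⟫_ℂ • f i = x) ∧ ∀ i, ‖f i‖ ^ 2 = c i := by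
  obtain ⟨f, hf, hn⟩ := h
  refine ⟨f ∘ σ.symm, fun x => ?_, fun i => ?_⟩
  · have h1 := Equiv.sum_comp σ.symm (fun k => ⟪f k, x⟫_ℂ • f k)
    simp only [Function.comp_apply]
    exact h1.trans (hf x)
  · simpa using hn (σ.symm i)

private lemma frame_ex (N : ℕ) : ∀ (H : Type u) [NormedAddCommGroup H]
    [InnerProductSpace ℂ H] [FiniteDimensional ℂ H] (c : Fin N → ℝ),
    (∀ i, 0 ≤ c i) → (∀ i, c i ≤ 1) → (∑ i, c i = (finrank ℂ H : ℝ)) →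
    ∃ f : Fin N → H, (∀ x : H, ∑ i, ⟪f i, x⟫_ℂ • f i = x) ∧ ∀ i, ‖f i‖ ^ 2 = c i := by
  induction N using Nat.strong_induction_on with
  | _ N ih =>
  rcases N with _ | _ | N
  · -- N = 0
    intro H _ _ _ c h0 h1 hs
    simp only [Finset.univ_eq_empty, Finset.sum_empty] at hs
    have hr : finrank ℂ H = 0 := by exact_mod_cast hs.symm
    have : Subsingleton H := Module.finrank_zero_iff.mp hr
    exact ⟨fun _ => 0, fun x => (Subsingleton.elim _ _), fun i => i.elim0⟩
  · -- N = 1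
    intro H _ _ _ c h0 h1 hs
    rw [Fin.sum_univ_one] at hs
    have hn1 : finrank ℂ H ≤ 1 := by
      have h := h1 0
      rw [hs] at h
      exact_mod_cast h
    rcases Nat.eq_or_lt_of_le hn1 with hn | hn
    · obtain ⟨e, he⟩ := exists_unit_vec (H := H) (by omega)
      have he0 : e ≠ 0 := by intro h; rw [h, norm_zero] at he; norm_num at he
      have hc0 : c 0 = 1 := by rw [hs, hn]; norm_num
      have htop : (ℂ ∙ e) = ⊤ :=
        Submodule.eq_top_of_finrank_eq (by rw [finrank_span_singleton he0, hn])
      refine ⟨fun _ => e, fun x => ?_, fun i => ?_⟩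
      · have hx : x ∈ ℂ ∙ e := htop ▸ Submodule.mem_top
        obtain ⟨k, hk⟩ := Submodule.mem_span_singleton.mp hx
        rw [Fin.sum_univ_one, ← hk, inner_smul_right, inner_self_eq_norm_sq_to_K, he]
        simp
      · rw [Fin.fin_one_eq_zero i, hc0, he]; norm_num
    · have h : finrank ℂ H = 0 := by omega
      have : Subsingleton H := Module.finrank_zero_iff.mp h
      refine ⟨fun _ => 0, fun x => (Subsingleton.elim _ _), fun i => ?_⟩
      have hc : c 0 = 0 := by rw [hs, h]; norm_num
      rw [Fin.fin_one_eq_zero i]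
      simp [hc]
  · -- N + 2
    intro H _ _ _ c h0 h1 hs
    have h01ne : (0 : Fin (N + 2)) ≠ 1 := by simp [Fin.ext_iff]
    by_cases hpair : ∃ i j : Fin (N + 2), i ≠ j ∧ c i + c j ≤ 1
    · -- merge case
      obtain ⟨i, j, hij, hle⟩ := hpair
      set τ : Equiv.Perm (Fin (N + 2)) := Equiv.swap 0 i with hτ
      set σ : Equiv.Perm (Fin (N + 2)) := τ * Equiv.swap 1 (τ.symm j) with hσ
      have hτj : τ.symm j ≠ 0 := by
        intro h
        apply hij
        have h2 := congrArg τ h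
        rw [Equiv.apply_symm_apply] at h2
        rw [h2, hτ, Equiv.swap_apply_left]
      have hσ0 : σ 0 = i := by
        have e1 : σ 0 = τ (Equiv.swap 1 (τ.symm j) 0) := rfl
        rw [e1, Equiv.swap_apply_of_ne_of_ne h01ne hτj.symm, hτ, Equiv.swap_apply_left]
      have hσ1 : σ 1 = j := by
        have e2 : σ 1 = τ (Equiv.swap 1 (τ.symm j) 1) := rfl
        rw [e2, Equiv.swap_apply_left, Equiv.apply_symm_apply]
      apply frame_transfer c σ
      set c' : Fin (N + 2) → ℝ := fun k => c (σ k) with hc'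
      have hs' : ∑ k, c' k = (finrank ℂ H : ℝ) := by
        rw [← hs]; exact Equiv.sum_comp σ (fun k => c k)
      have h01 : c' 0 + c' 1 ≤ 1 := by rw [hc']; simp only [hσ0, hσ1]; exact hle
      set d : Fin (N + 1) → ℝ := Fin.cons (c' 0 + c' 1) (fun k => c' k.succ.succ) with hd
      have hd0 : ∀ k, 0 ≤ d k := by
        intro k
        cases k using Fin.cases with
        | zero =>
          simp only [hd, Fin.cons_zero]
          have := h0 (σ 0); have := h0 (σ 1)
          rw [hc']; positivity
        | succ k => simp only [hd, Fin.cons_succ]; exact h0 _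
      have hd1 : ∀ k, d k ≤ 1 := by
        intro k
        cases k using Fin.cases with
        | zero => simpa only [hd, Fin.cons_zero] using h01
        | succ k => simp only [hd, Fin.cons_succ]; exact h1 _
      have hds : ∑ k, d k = (finrank ℂ H : ℝ) := by
        rw [← hs', Fin.sum_univ_succ, Fin.sum_univ_succ, Fin.sum_univ_succ]
        simp only [hd, Fin.cons_zero, Fin.cons_succ]
        rw [Fin.succ_zero_eq_one]
        ring
      obtain ⟨g, hgf, hgn⟩ := ih (N + 1) (by omega) H d hd0 hd1 hds
      set s := c' 0 + c' 1 with hsdef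
      have hc'0 : 0 ≤ c' 0 := h0 _
      have hc'1 : 0 ≤ c' 1 := h0 _
      have hs0 : 0 ≤ s := by rw [hsdef]; positivity
      have hg0 : ‖g 0‖ ^ 2 = s := by simpa [hd] using hgn 0
      have hnorm : ∀ ct : ℝ, 0 ≤ ct → ct ≤ s →
          ‖((Real.sqrt (ct / s) : ℝ) : ℂ) • g 0‖ ^ 2 = ct := by
        intro ct hct hcts
        rw [norm_smul, mul_pow, Complex.norm_real, Real.norm_eq_abs, sq_abs, hg0,
          Real.sq_sqrt (by positivity)]
        rcases eq_or_lt_of_le hs0 with hz | hz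
        · rw [← hz]
          simp only [div_zero, mul_zero]
          linarith
        · rw [div_mul_cancel₀ _ hz.ne']
      set t0 : ℝ := Real.sqrt (c' 0 / s) with ht0
      set t1 : ℝ := Real.sqrt (c' 1 / s) with ht1
      refine ⟨Fin.cons ((t0 : ℂ) • g 0) (Fin.cons ((t1 : ℂ) • g 0) (fun k => g k.succ)),
        fun x => ?_, fun k => ?_⟩
      · rw [Fin.sum_univ_succ, Fin.sum_univ_succ]
        simp only [Fin.cons_zero, Fin.cons_succ]
        have hIH := hgf x
        rw [Fin.sum_univ_succ] at hIH
        have hpairsum : ⟪(t0 : ℂ) • g 0, x⟫_ℂ • ((t0 : ℂ) • g 0)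
            + ⟪(t1 : ℂ) • g 0, x⟫_ℂ • ((t1 : ℂ) • g 0) = ⟪g 0, x⟫_ℂ • g 0 := by
          rcases eq_or_lt_of_le hs0 with hz | hz
          · have h2 : ‖g 0‖ ^ 2 = 0 := by rw [hg0, ← hz]
            have hz0 : g 0 = 0 := norm_eq_zero.mp (pow_eq_zero_iff two_ne_zero |>.mp h2)
            simp [hz0]
          · have ht0s : t0 ^ 2 = c' 0 / s := Real.sq_sqrt (by positivity)
            have ht1s : t1 ^ 2 = c' 1 / s := Real.sq_sqrt (by positivity)
            have hts : t0 ^ 2 + t1 ^ 2 = 1 := by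
              rw [ht0s, ht1s, ← add_div, ← hsdef, div_self hz.ne']
            have htsC : (t0 : ℂ) ^ 2 + (t1 : ℂ) ^ 2 = 1 := by exact_mod_cast hts
            simp only [inner_smul_left, Complex.conj_ofReal, smul_smul]
            rw [← add_smul]
            congr 1
            linear_combination ⟪g 0, x⟫_ℂ * htsC
        rw [← add_assoc, hpairsum]
        exact hIH
      · cases k using Fin.cases with
        | zero =>
          simp only [Fin.cons_zero]
          rw [ht0]
          exact hnorm (c' 0) hc'0 (by rw [hsdef]; linarith)
        | succ k =>
          cases k using Fin.cases with
          | zero =>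
            simp only [Fin.cons_succ, Fin.succ_zero_eq_one, Fin.cons_zero]
            rw [ht1]
            exact hnorm (c' 1) hc'1 (by rw [hsdef]; linarith)
          | succ k =>
            simp only [Fin.cons_succ]
            simpa [hd] using hgn k.succ
    · -- split case
      push_neg at hpair
      have h01 : 1 < c 0 + c 1 := hpair 0 1 h01ne
      have hrest0 : (0 : ℝ) ≤ ∑ k : Fin N, c k.succ.succ :=
        Finset.sum_nonneg fun k _ => h0 _
      have hsum2 : ∑ i, c i = c 0 + c 1 + ∑ k : Fin N, c k.succ.succ := by
        rw [Fin.sum_univ_succ, Fin.sum_univ_succ, Fin.succ_zero_eq_one]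
        ring
      have hn1 : (1 : ℝ) < (finrank ℂ H : ℝ) := by rw [← hs, hsum2]; linarith
      have hnk : 1 ≤ finrank ℂ H := by exact_mod_cast hn1.le
      obtain ⟨e, he⟩ := exists_unit_vec (H := H) (by omega)
      have he0 : e ≠ 0 := by intro h; rw [h, norm_zero] at he; norm_num at he
      have hee : ⟪e, e⟫_ℂ = 1 := by
        rw [inner_self_eq_norm_sq_to_K, he]; norm_num
      set K : Submodule ℂ H := (ℂ ∙ e)ᗮ with hK
      have hKrank : finrank ℂ K = finrank ℂ H - 1 := by
        have h1' := Submodule.finrank_add_finrank_orthogonal (K := (ℂ ∙ e))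
        rw [finrank_span_singleton he0, ← hK] at h1'
        omega
      set d0 : ℝ := c 0 + c 1 - 1 with hd0def
      have hd00 : 0 ≤ d0 := by rw [hd0def]; linarith
      have hd01 : d0 ≤ 1 := by have := h1 0; have := h1 1; rw [hd0def]; linarith
      set dd : Fin (N + 1) → ℝ := Fin.cons d0 (fun k => c k.succ.succ) with hdd
      have hdd0 : ∀ k, 0 ≤ dd k := by
        intro k; cases k using Fin.cases with
        | zero => simpa [hdd] using hd00
        | succ k => simp only [hdd, Fin.cons_succ]; exact h0 _
      have hdd1 : ∀ k, dd k ≤ 1 := by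
        intro k; cases k using Fin.cases with
        | zero => simpa [hdd] using hd01
        | succ k => simp only [hdd, Fin.cons_succ]; exact h1 _
      have hdds : ∑ k, dd k = (finrank ℂ K : ℝ) := by
        rw [Fin.sum_univ_succ]
        simp only [hdd, Fin.cons_zero, Fin.cons_succ]
        rw [hKrank, Nat.cast_sub hnk, ← hs, hsum2, hd0def]
        push_cast
        ring
      obtain ⟨g, hgf, hgn⟩ := ih (N + 1) (by omega) K dd hdd0 hdd1 hdds
      have hge : ∀ k, ⟪e, (g k : H)⟫_ℂ = 0 := fun k =>
        (Submodule.mem_orthogonal _ _).mp (g k).2 e (Submodule.mem_span_singleton_self e)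
      have hge' : ∀ k, ⟪(g k : H), e⟫_ℂ = 0 := fun k => inner_eq_zero_symm.mpr (hge k)
      have hg0 : ‖(g 0 : H)‖ ^ 2 = d0 := by
        rw [← Submodule.coe_norm]
        simpa [hdd] using hgn 0
      set u : ℝ := (1 - c 1) / (1 - d0) with hudef
      have hu0 : 0 ≤ u := div_nonneg (by linarith [h1 1]) (by linarith)
      have hkey : u * (1 - d0) = 1 - c 1 := by
        rcases eq_or_lt_of_le hd01 with h | h
        · have hc1 : c 1 = 1 := by linarith [h1 0, h1 1]
          rw [h, hc1]; ring
        · rw [hudef]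
          exact div_mul_cancel₀ _ (ne_of_gt (by linarith))
      have hu1 : u ≤ 1 := by
        rcases eq_or_lt_of_le hd01 with h | h
        · rw [hudef, h]; norm_num
        · rw [hudef, div_le_one (by linarith)]; linarith [h1 0]
      set a : ℝ := Real.sqrt u with ha
      set b : ℝ := Real.sqrt (1 - u) with hb
      have ha2 : a ^ 2 = u := Real.sq_sqrt hu0
      have hb2 : b ^ 2 = 1 - u := Real.sq_sqrt (by linarith)
      set f0 : H := (a : ℂ) • e + (b : ℂ) • (g 0 : H) with hf0
      set f1 : H := (b : ℂ) • e + ((-a : ℝ) : ℂ) • (g 0 : H) with hf1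
      have horth : ∀ s t : ℝ, ⟪(s : ℂ) • e, (t : ℂ) • (g 0 : H)⟫_ℂ = 0 := by
        intro s t
        rw [inner_smul_left, inner_smul_right, hge 0]
        ring
      have hnormst : ∀ s t : ℝ, ‖(s : ℂ) • e + (t : ℂ) • (g 0 : H)‖ ^ 2
          = s ^ 2 + t ^ 2 * d0 := by
        intro s t
        have hh := norm_add_sq_eq_norm_sq_add_norm_sq_of_inner_eq_zero _ _ (horth s t)
        have h2 : ‖(s : ℂ) • e + (t : ℂ) • (g 0 : H)‖ ^ 2
            = ‖(s : ℂ) • e‖ ^ 2 + ‖(t : ℂ) • (g 0 : H)‖ ^ 2 := by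
          rw [pow_two, pow_two, pow_two]; exact hh
        rw [h2, norm_smul, norm_smul, Complex.norm_real, Complex.norm_real,
          Real.norm_eq_abs, Real.norm_eq_abs, mul_pow, mul_pow, sq_abs, sq_abs, he, hg0]
        ring
      have hnf0 : ‖f0‖ ^ 2 = c 0 := by
        rw [hf0, hnormst a b, ha2, hb2]
        linear_combination hkey + hd0def
      have hnf1 : ‖f1‖ ^ 2 = c 1 := by
        rw [hf1, hnormst b (-a), hb2, neg_sq, ha2]
        linear_combination -hkey
      have hc1C : (a : ℂ) ^ 2 + (b : ℂ) ^ 2 = 1 := by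
        have : a ^ 2 + b ^ 2 = 1 := by rw [ha2, hb2]; ring
        exact_mod_cast this
      refine ⟨Fin.cons f0 (Fin.cons f1 (fun k => (g k.succ : H))),
        fun x => ?_, fun k => ?_⟩
      · set ie : ℂ := ⟪e, x⟫_ℂ with hie
        set z : H := x - ie • e with hz
        have hzK : z ∈ K := by
          rw [hK, Submodule.mem_orthogonal]
          intro v hv
          obtain ⟨kk, hkk⟩ := Submodule.mem_span_singleton.mp hv
          rw [← hkk, inner_smul_left, hz, inner_sub_right, inner_smul_right, hee, hie]
          ring
        have hxz : x = ie • e + z := by rw [hz]; module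
        have hIH := hgf ⟨z, hzK⟩
        have hIH' : ∑ k : Fin (N + 1), ⟪(g k : H), z⟫_ℂ • (g k : H) = z := by
          have hcoe := congrArg (Subtype.val) hIH
          rw [AddSubmonoidClass.coe_finset_sum] at hcoe
          simpa [Submodule.coe_inner, Submodule.coe_smul] using hcoe
        have hinner_eq : ∀ k, ⟪(g k : H), x⟫_ℂ = ⟪(g k : H), z⟫_ℂ := by
          intro k
          conv_lhs => rw [hxz]
          rw [inner_add_right, inner_smul_right, hge' k, mul_zero, zero_add]
        have hIH'' : ∑ k : Fin (N + 1), ⟪(g k : H), x⟫_ℂ • (g k : H) = z := by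
          rw [← hIH']
          exact Finset.sum_congr rfl fun k _ => by rw [hinner_eq k]
        rw [Fin.sum_univ_succ, Fin.sum_univ_succ]
        simp only [Fin.cons_zero, Fin.cons_succ]
        rw [Fin.sum_univ_succ] at hIH''
        have hstar : ⟪f0, x⟫_ℂ • f0 + ⟪f1, x⟫_ℂ • f1
            = ie • e + ⟪(g 0 : H), x⟫_ℂ • (g 0 : H) := by
          rw [hf0, hf1]
          simp only [inner_add_left, inner_smul_left, Complex.conj_ofReal, smul_add,
            smul_smul, hie]
          match_scalars
          · push_cast
            linear_combination ⟪e, x⟫_ℂ * hc1C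
          · push_cast
            linear_combination ⟪(g 0 : H), x⟫_ℂ * hc1C
        have hsplit : ∑ k : Fin N, ⟪(g k.succ : H), x⟫_ℂ • (g k.succ : H)
            = z - ⟪(g 0 : H), x⟫_ℂ • (g 0 : H) := by
          rw [eq_sub_iff_add_eq, add_comm]
          exact hIH''
        rw [← add_assoc, hstar, hsplit]
        conv_rhs => rw [hxz]
        abel
      · cases k using Fin.cases with
        | zero => simpa using hnf0
        | succ k =>
          cases k using Fin.cases with
          | zero =>
            simp only [Fin.cons_succ, Fin.succ_zero_eq_one, Fin.cons_zero]
            exact hnf1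
          | succ k =>
            simp only [Fin.cons_succ]
            rw [← Submodule.coe_norm]
            simpa [hdd] using hgn k.succ

theorem stmt_4 {H : Type*} [NormedAddCommGroup H] [InnerProductSpace ℂ H]
    [FiniteDimensional ℂ H] {N : ℕ} (q : Fin N → ℝ)
    (hq1 : ∀ i, 1 ≤ q i) (hqs : ∑ i, 1 / q i = (Module.finrank ℂ H : ℝ)) :
    ∃ f : Fin N → H, (∀ x : H, ∑ i, ⟪f i, x⟫_ℂ • f i = x) ∧
      ∀ i, ‖f i‖ = 1 / Real.sqrt (q i) := by
  obtain ⟨f, hf, hn⟩ := frame_ex N H (fun i => 1 / q i)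
    (fun i => div_nonneg zero_le_one (by linarith [hq1 i]))
    (fun i => by rw [div_le_one (by linarith [hq1 i])]; exact hq1 i)
    hqs
  refine ⟨f, hf, fun i => ?_⟩
  rw [← Real.sqrt_sq (norm_nonneg (f i)), hn i, one_div, one_div, Real.sqrt_inv]
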